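/- Let R = 𝔽₂ + u𝔽₂ (u² = 0), realized as DualNumber (ZMod 2). Let C ⊆ Rⁿ be a self-dual code (C = C⊥ under the form ∑ᵢ vᵢwᵢ) which is spanned as an R-module by vectors r₁, …, r_m ∈ Rⁿ. Let c be a unit of R and let X ∈ Rⁿ satisfy ⟨X, X⟩ = 1, where ⟨v, w⟩ = ∑ᵢ vᵢwᵢ. For each i let yᵢ = ⟨rᵢ, X⟩. Then the R-submodule of R^{n+2} spanned by the vector (1, 0, X) together with the vectors (yᵢ, c·yᵢ, rᵢ) for i = 1, …, m is a self-dual code of length n + 2. -/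
import Mathlib
set_option maxHeartbeats 1000000
set_option synthInstance.maxHeartbeats 100000


/-- The dual of a linear code `C ⊆ Rⁿ` with respect to the form `∑ᵢ vᵢ wᵢ`. -/
def dualCode {R : Type*} [CommRing R] {ι : Type*} [Fintype ι]
    (C : Submodule R (ι → R)) : Submodule R (ι → R) where
  carrier := {w | ∀ v ∈ C, ∑ i, v i * w i = 0}
  zero_mem' := by intro v _; simp
  add_mem' := by
    intro a b ha hb v hv
    have h1 := ha v hv
    have h2 := hb v hv
    simp only [Pi.add_apply, mul_add, Finset.sum_add_distrib, h1, h2, add_zero]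
  smul_mem' := by
    intro c w hw v hv
    have h := hw v hv
    have : ∑ i, v i * (c • w) i = c * ∑ i, v i * w i := by
      rw [Finset.mul_sum]
      exact Finset.sum_congr rfl fun i _ => by
        simp [smul_eq_mul, mul_left_comm]
    simp only [Set.mem_setOf_eq] at *
    simpa [h] using this


abbrev R2 := DualNumber (ZMod 2)

lemma selfadd (a : R2) : a + a = 0 := by
  ext <;> exact (by decide : ∀ x : ZMod 2, x + x = 0) _

lemma unitsq (c : R2) (hc : IsUnit c) : c * c = 1 := by
  have h := TrivSqZeroExt.isUnit_iff_isUnit_fst.mp hc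
  have h1 : c.fst = 1 := (by decide : ∀ x : ZMod 2, IsUnit x → x = 1) _ h
  ext
  · simp [h1]
  · show c.fst * c.snd + c.snd * c.fst = (0 : ZMod 2)
    rw [h1]; simpa using (by decide : ∀ x : ZMod 2, x + x = 0) c.snd

lemma pair_span {k : ℕ} (S : Set (Fin k → R2)) (w : Fin k → R2)
    (h : ∀ s ∈ S, ∑ i, s i * w i = 0) :
    ∀ v ∈ Submodule.span R2 S, ∑ i, v i * w i = 0 := by
  intro v hv
  induction hv using Submodule.span_induction with
  | mem x hx => exact h x hx
  | zero => simp
  | add x y _ _ hx hy => simp [add_mul, Finset.sum_add_distrib, hx, hy]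
  | smul t x _ hx =>
    have : ∑ i, (t • x) i * w i = t * ∑ i, x i * w i := by
      rw [Finset.mul_sum]
      exact Finset.sum_congr rfl fun i _ => by simp [smul_eq_mul, mul_assoc]
    rw [this, hx, mul_zero]

def pmap {n : ℕ} (X : Fin n → R2) : (Fin n → R2) →ₗ[R2] R2 where
  toFun := fun v => ∑ j, v j * X j
  map_add' := fun u v => by simp [add_mul, Finset.sum_add_distrib]
  map_smul' := fun t v => by
    simp only [RingHom.id_apply, smul_eq_mul, Finset.mul_sum]
    exact Finset.sum_congr rfl fun j _ => by
      show (t • v) j * X j = t * (v j * X j)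
      simp [smul_eq_mul, mul_assoc]

lemma pmap_apply {n : ℕ} (X v : Fin n → R2) : pmap X v = ∑ j, v j * X j := rfl

def Lmap {n : ℕ} (c : R2) (X : Fin n → R2) : (Fin n → R2) →ₗ[R2] (Fin (n+2) → R2) where
  toFun := fun v => Fin.cons (pmap X v) (Fin.cons (c * pmap X v) v)
  map_add' := fun u v => by
    funext i
    refine Fin.cases ?_ (fun j => Fin.cases ?_ (fun k => ?_) j) i <;>
      simp only [Pi.add_apply, Fin.cons_zero, Fin.cons_succ, map_add, mul_add]
  map_smul' := fun t v => by
    funext i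
    refine Fin.cases ?_ (fun j => Fin.cases ?_ (fun k => ?_) j) i <;>
      simp only [Pi.smul_apply, Fin.cons_zero, Fin.cons_succ, map_smul, RingHom.id_apply,
        smul_eq_mul, mul_left_comm]

lemma Lmap_apply {n : ℕ} (c : R2) (X v : Fin n → R2) :
    Lmap c X v = Fin.cons (pmap X v) (Fin.cons (c * pmap X v) v) := rfl

theorem stmt10 {n m : ℕ}
    (C : Submodule (DualNumber (ZMod 2)) (Fin n → DualNumber (ZMod 2)))
    (hC : C = dualCode C)
    (r : Fin m → (Fin n → DualNumber (ZMod 2)))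
    (hspan : C = Submodule.span (DualNumber (ZMod 2)) (Set.range r))
    (c : DualNumber (ZMod 2)) (hc : IsUnit c)
    (X : Fin n → DualNumber (ZMod 2)) (hX : ∑ i, X i * X i = 1)
    (y : Fin m → DualNumber (ZMod 2)) (hy : y = fun i => ∑ j, r i j * X j)
    (D : Submodule (DualNumber (ZMod 2)) (Fin (n + 2) → DualNumber (ZMod 2)))
    (hD : D = Submodule.span (DualNumber (ZMod 2))
      ({Fin.cons 1 (Fin.cons 0 X)} ∪
        Set.range fun i => Fin.cons (y i) (Fin.cons (c * y i) (r i)))) :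
    D = dualCode D := by
  set g0 : Fin (n+2) → R2 := Fin.cons 1 (Fin.cons 0 X) with hg0def
  set g : Fin m → (Fin (n+2) → R2) := fun i => Fin.cons (y i) (Fin.cons (c * y i) (r i)) with hgdef
  set S : Set (Fin (n+2) → R2) := {g0} ∪ Set.range g with hSdef
  have hcc := unitsq c hc
  have hrC : ∀ i, r i ∈ C := fun i => by
    rw [hspan]; exact Submodule.subset_span ⟨i, rfl⟩
  have hrr : ∀ i j, ∑ k, r i k * r j k = 0 := fun i j => by
    have := hC ▸ hrC j
    exact this (r i) (hrC i)
  have hXr : ∀ i, ∑ j, X j * r i j = y i := fun i => by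
    rw [hy]; exact Finset.sum_congr rfl fun j _ => mul_comm _ _
  have hrX : ∀ i, ∑ j, r i j * X j = y i := fun i => (congrFun hy i).symm
  have horth : ∀ s ∈ S, ∀ t ∈ S, ∑ i, s i * t i = 0 := by
    rintro s (rfl | ⟨i, rfl⟩) t (rfl | ⟨j, rfl⟩)
    · simp only [hg0def, Fin.sum_univ_succ, Fin.cons_zero, Fin.cons_succ]
      rw [show (∑ i, X i * X i) = 1 from hX]
      linear_combination selfadd 1
    · simp only [hg0def, hgdef, Fin.sum_univ_succ, Fin.cons_zero, Fin.cons_succ]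
      rw [hXr j]
      linear_combination selfadd (y j)
    · simp only [hg0def, hgdef, Fin.sum_univ_succ, Fin.cons_zero, Fin.cons_succ]
      rw [hrX i]
      linear_combination selfadd (y i)
    · simp only [hgdef, Fin.sum_univ_succ, Fin.cons_zero, Fin.cons_succ]
      rw [hrr i j]
      linear_combination (y i * y j) * hcc + selfadd (y i * y j)
  apply le_antisymm
  · rw [hD]
    apply Submodule.span_le.mpr
    intro s hs v hv
    exact pair_span S s (fun t ht => horth t ht s hs) v hv
  intro w hw
  set a : R2 := w 0 with hadef
  set b : R2 := Fin.tail w 0 with hbdef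
  set z : Fin n → R2 := Fin.tail (Fin.tail w) with hzdef
  have hwcons : w = Fin.cons a (Fin.cons b z) := by
    rw [hzdef, hbdef, Fin.cons_self_tail, hadef, Fin.cons_self_tail]
  have hg0D : g0 ∈ D := hD ▸ Submodule.subset_span (Or.inl rfl)
  have hgD : ∀ i, g i ∈ D := fun i => hD ▸ Submodule.subset_span (Or.inr ⟨i, rfl⟩)
  have h1 : a + ∑ j, X j * z j = 0 := by
    have := hw g0 hg0D
    rw [hwcons] at this
    simpa only [hg0def, Fin.sum_univ_succ, Fin.cons_zero, Fin.cons_succ, one_mul,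
      zero_mul, zero_add] using this
  have haz : ∑ j, X j * z j = a := by linear_combination h1 - selfadd a
  have h2 : ∀ i, ∑ j, r i j * z j = y i * a + c * y i * b := by
    intro i
    have h := hw (g i) (hgD i)
    rw [hwcons] at h
    simp only [hgdef, Fin.sum_univ_succ, Fin.cons_zero, Fin.cons_succ] at h
    linear_combination h - selfadd (y i * a + c * y i * b)
  set z'' : Fin n → R2 := fun j => z j + (a + c * b) * X j with hz''def
  have hz''C : z'' ∈ C := by
    rw [hC]
    intro v hv
    rw [hspan] at hv
    refine pair_span (Set.range r) z'' ?_ v hv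
    rintro s ⟨i, rfl⟩
    have expand : ∑ k, r i k * z'' k = (∑ k, r i k * z k) + (a + c * b) * ∑ k, r i k * X k := by
      rw [Finset.mul_sum, ← Finset.sum_add_distrib]
      exact Finset.sum_congr rfl fun k _ => by rw [hz''def]; ring
    rw [expand, h2 i, hrX i]
    linear_combination selfadd (y i * a) + selfadd (c * y i * b)
  set p : (Fin n → R2) →ₗ[R2] R2 := pmap X with hpdef
  have hpapp : ∀ v, p v = ∑ j, v j * X j := fun v => rfl
  set L : (Fin n → R2) →ₗ[R2] (Fin (n+2) → R2) := Lmap c X with hLdef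
  have hLapp : ∀ v, L v = Fin.cons (p v) (Fin.cons (c * p v) v) := fun v => rfl
  have hLr : ∀ i, L (r i) = g i := by
    intro i
    rw [hLapp, show p (r i) = y i from hrX i, hgdef]
  have hLz''D : L z'' ∈ D := by
    have h1 : L z'' ∈ Submodule.map L (Submodule.span R2 (Set.range r)) :=
      Submodule.mem_map_of_mem (hspan ▸ hz''C)
    rw [Submodule.map_span] at h1
    rw [hD]
    refine Submodule.span_mono ?_ h1
    rintro _ ⟨_, ⟨i, rfl⟩, rfl⟩
    exact Or.inr ⟨i, (hLr i).symm⟩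
  have hpz'' : p z'' = c * b := by
    have expand : p z'' = (∑ j, z j * X j) + (a + c * b) * ∑ j, X j * X j := by
      rw [hpapp, Finset.mul_sum, ← Finset.sum_add_distrib]
      exact Finset.sum_congr rfl fun j _ => by rw [hz''def]; ring
    rw [expand, hX, show (∑ j, z j * X j) = a from
      (Finset.sum_congr rfl fun j _ => mul_comm _ _).trans haz]
    linear_combination selfadd a
  have hfinal : w = (a + c * b) • g0 + L z'' := by
    rw [hwcons, hLapp, hpz'']
    funext i
    refine Fin.cases ?_ (fun j => Fin.cases ?_ (fun k => ?_) j) i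
    · simp only [Pi.add_apply, Pi.smul_apply, Fin.cons_zero, hg0def, smul_eq_mul]
      linear_combination -selfadd (c * b)
    · simp only [Pi.add_apply, Pi.smul_apply, Fin.cons_succ, Fin.cons_zero, hg0def,
        smul_eq_mul]
      linear_combination (-b) * hcc
    · simp only [Pi.add_apply, Pi.smul_apply, Fin.cons_succ, hg0def, hz''def, smul_eq_mul]
      linear_combination -selfadd ((a + c * b) * X k)
  rw [hfinal]
  exact D.add_mem (D.smul_mem _ hg0D) hLz''D
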